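/- Let x, y ∈ (0,1) and n ≥ 1. If X ∼ B(n,x) and Y ∼ B(n,y) are independent, then for every convex f : ℝ → ℝ, E f(X+Y) ≤ E f(S*), where S* ∼ B(2n, (x+y)/2). Equivalently, ∑_{k=0}^{2n} (∑_{i+j=k} C(n,i)x^i(1−x)^{n−i}·C(n,j)y^j(1−y)^{n−j})·f(k) ≤ ∑_{k=0}^{2n} C(2n,k)·((x+y)/2)^k·(1−(x+y)/2)^{2n−k}·f(k). -/

import Mathlib

open Finset

noncomputable def binR (n k : ℕ) (p : ℝ) : ℝ := (n.choose k : ℝ) * p ^ k * (1 - p) ^ (n - k)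



lemma W_rec (n : ℕ) (p : ℝ) (g : ℕ → ℝ) :
    ∑ k ∈ range (n + 2), binR (n + 1) k p * g k
      = ∑ k ∈ range (n + 1), binR n k p * ((1 - p) * g k + p * g (k + 1)) := by
  rw [Finset.sum_range_succ' (fun k => binR (n+1) k p * g k) (n+1)]
  have hsplit : ∀ k ∈ range (n+1),
      binR (n+1) (k+1) p * g (k+1)
        = binR n k p * (p * g (k+1))
          + ((n.choose (k+1) : ℝ) * p ^ (k+1) * (1-p) ^ (n-k)) * g (k+1) := by
    intro k hk
    simp only [mem_range] at hk
    unfold binR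
    rw [Nat.choose_succ_succ]
    push_cast
    simp only [Nat.succ_eq_add_one]
    ring
  rw [Finset.sum_congr rfl hsplit, Finset.sum_add_distrib]
  have hR : ∀ k ∈ range (n+1), binR n k p * ((1 - p) * g k + p * g (k + 1))
      = binR n k p * ((1-p) * g k) + binR n k p * (p * g (k+1)) := by
    intro k _; ring
  rw [Finset.sum_congr rfl hR, Finset.sum_add_distrib]
  have h2 : ∑ k ∈ range (n+1), ((n.choose (k+1) : ℝ) * p ^ (k+1) * (1-p) ^ (n-k)) * g (k+1)
        + binR (n+1) 0 p * g 0
      = ∑ k ∈ range (n+1), binR n k p * ((1-p) * g k) := by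
    rw [Finset.sum_range_succ (fun k => ((n.choose (k+1) : ℝ) * p ^ (k+1) * (1-p) ^ (n-k)) * g (k+1))]
    rw [Nat.choose_succ_self]
    rw [Finset.sum_range_succ' (fun k => binR n k p * ((1-p) * g k)) n]
    have : ∀ k ∈ range n, ((n.choose (k+1) : ℝ) * p ^ (k+1) * (1-p) ^ (n-k)) * g (k+1)
        = binR n (k+1) p * ((1-p) * g (k+1)) := by
      intro k hk
      simp only [mem_range] at hk
      unfold binR
      have : n - k = (n - (k+1)) + 1 := by omega
      rw [this, pow_succ]
      ring
    rw [Finset.sum_congr rfl this]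
    unfold binR
    simp only [Nat.choose_zero_right, Nat.cast_zero, Nat.cast_one, pow_zero, Nat.sub_zero,
      Nat.cast_ofNat, CharP.cast_eq_zero]
    ring
  linarith [h2]


lemma binR_nonneg {n k : ℕ} {p : ℝ} (h0 : 0 ≤ p) (h1 : p ≤ 1) : 0 ≤ binR n k p := by
  unfold binR
  have : (0:ℝ) ≤ 1 - p := by linarith
  positivity

lemma double_rec (n : ℕ) (x y : ℝ) (F : ℕ → ℝ) :
    ∑ i ∈ range (n + 2), ∑ j ∈ range (n + 2), binR (n + 1) i x * binR (n + 1) j y * F (i + j)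
      = ∑ i ∈ range (n + 1), ∑ j ∈ range (n + 1), binR n i x * binR n j y *
          ((1-x)*(1-y) * F (i+j) + ((1-x)*y + x*(1-y)) * F (i+j+1) + x*y * F (i+j+2)) := by
  calc
    ∑ i ∈ range (n + 2), ∑ j ∈ range (n + 2), binR (n + 1) i x * binR (n + 1) j y * F (i + j)
      = ∑ i ∈ range (n + 2), binR (n + 1) i x *
          ∑ j ∈ range (n + 2), binR (n + 1) j y * F (i + j) := by
        refine sum_congr rfl fun i _ => ?_
        rw [Finset.mul_sum]
        exact sum_congr rfl fun j _ => by ring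
    _ = ∑ i ∈ range (n + 2), binR (n + 1) i x *
          ∑ j ∈ range (n + 1), binR n j y * ((1-y) * F (i+j) + y * F (i+j+1)) := by
        refine sum_congr rfl fun i _ => ?_
        rw [W_rec n y (fun j => F (i + j))]
        refine congrArg _ (sum_congr rfl fun k _ => ?_)
        rw [← Nat.add_assoc]
    _ = ∑ i ∈ range (n + 1), binR n i x *
          ((1-x) * (∑ j ∈ range (n + 1), binR n j y * ((1-y) * F (i+j) + y * F (i+j+1)))
            + x * (∑ j ∈ range (n + 1), binR n j y * ((1-y) * F (i+1+j) + y * F (i+1+j+1)))) := by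
        rw [W_rec n x (fun i => ∑ j ∈ range (n + 1),
          binR n j y * ((1-y) * F (i+j) + y * F (i+j+1)))]
    _ = ∑ i ∈ range (n + 1), ∑ j ∈ range (n + 1), binR n i x * binR n j y *
          ((1-x)*(1-y) * F (i+j) + ((1-x)*y + x*(1-y)) * F (i+j+1) + x*y * F (i+j+2)) := by
        refine sum_congr rfl fun i _ => ?_
        rw [Finset.mul_sum, Finset.mul_sum, mul_add, Finset.mul_sum, Finset.mul_sum,
          ← Finset.sum_add_distrib]
        refine sum_congr rfl fun j _ => ?_
        rw [show i + 1 + j = i + j + 1 from by omega,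
          show i + j + 1 + 1 = i + j + 2 from rfl]
        ring

lemma double_rec_diag (n : ℕ) (p : ℝ) (F : ℕ → ℝ) :
    ∑ k ∈ range (2*n + 3), binR (2*n + 2) k p * F k
      = ∑ k ∈ range (2*n + 1), binR (2*n) k p *
          ((1-p)^2 * F k + 2*p*(1-p) * F (k+1) + p^2 * F (k+2)) := by
  have h1 := W_rec (2*n + 1) p F
  have h2 := W_rec (2*n) p (fun k => (1-p) * F k + p * F (k+1))
  rw [show 2*n + 3 = 2*n + 1 + 2 from rfl, show 2*n + 2 = 2*n + 1 + 1 from rfl, h1, h2]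
  refine sum_congr rfl fun k _ => ?_
  ring

lemma convex_step {f : ℝ → ℝ} (hf : ConvexOn ℝ Set.univ f) {x y : ℝ}
    (hx0 : 0 ≤ x) (hx1 : x ≤ 1) (hy0 : 0 ≤ y) (hy1 : y ≤ 1) (z : ℝ) :
    (1-x)*(1-y) * f z + ((1-x)*y + x*(1-y)) * f (z+1) + x*y * f (z+2)
      ≤ (1-(x+y)/2)^2 * f z + 2*((x+y)/2)*(1-(x+y)/2) * f (z+1) + ((x+y)/2)^2 * f (z+2) := by
  have h := hf.2 (Set.mem_univ z) (Set.mem_univ (z+2))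
    (by norm_num : (0:ℝ) ≤ 1/2) (by norm_num : (0:ℝ) ≤ 1/2) (by norm_num)
  simp only [smul_eq_mul] at h
  have hmid : (1/2:ℝ)*z + (1/2)*(z+2) = z + 1 := by ring
  rw [hmid] at h
  have h2 : 0 ≤ f z + f (z+2) - 2 * f (z+1) := by linarith
  nlinarith [mul_nonneg (sq_nonneg (x - y)) h2]

lemma convexOn_shift {f : ℝ → ℝ} (hf : ConvexOn ℝ Set.univ f) (c : ℝ) :
    ConvexOn ℝ Set.univ (fun t => f (t + c)) := by
  refine ⟨convex_univ, fun a _ b _ p q hp hq hpq => ?_⟩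
  have h := hf.2 (Set.mem_univ (a + c)) (Set.mem_univ (b + c)) hp hq hpq
  have e : p • (a + c) + q • (b + c) = p • a + q • b + c := by
    simp only [smul_eq_mul]; linear_combination c * hpq
  rw [e] at h
  simpa using h


lemma binom_cx_main (n : ℕ) : ∀ (f : ℝ → ℝ), ConvexOn ℝ Set.univ f →
    ∀ x y : ℝ, 0 ≤ x → x ≤ 1 → 0 ≤ y → y ≤ 1 →
    ∑ i ∈ range (n + 1), ∑ j ∈ range (n + 1),
        binR n i x * binR n j y * f ((i : ℝ) + j)
      ≤ ∑ k ∈ range (2 * n + 1), binR (2 * n) k ((x + y) / 2) * f k := by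
  induction n with
  | zero =>
    intro f hf x y _ _ _ _
    simp [binR]
  | succ n ih =>
    intro f hf x y hx0 hx1 hy0 hy1
    set m : ℝ := (x + y) / 2 with hm
    have hm0 : 0 ≤ m := by rw [hm]; linarith
    have hm1 : m ≤ 1 := by rw [hm]; linarith
    set g : ℝ → ℝ := fun t => (1-m)^2 * f t + 2*m*(1-m) * f (t+1) + m^2 * f (t+2) with hg
    have hgconv : ConvexOn ℝ Set.univ g := by
      have h1 : ConvexOn ℝ Set.univ (fun t => (1-m)^2 * f t) := by
        simpa [smul_eq_mul] using hf.smul (by positivity : (0:ℝ) ≤ (1-m)^2)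
      have h2 : ConvexOn ℝ Set.univ (fun t => 2*m*(1-m) * f (t+1)) := by
        simpa [smul_eq_mul] using (convexOn_shift hf 1).smul
          (by nlinarith : (0:ℝ) ≤ 2*m*(1-m))
      have h3 : ConvexOn ℝ Set.univ (fun t => m^2 * f (t+2)) := by
        simpa [smul_eq_mul] using (convexOn_shift hf 2).smul (by positivity : (0:ℝ) ≤ m^2)
      exact (h1.add h2).add h3
    calc
      ∑ i ∈ range (n + 1 + 1), ∑ j ∈ range (n + 1 + 1),
          binR (n+1) i x * binR (n+1) j y * f ((i : ℝ) + j)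
        = ∑ i ∈ range (n + 2), ∑ j ∈ range (n + 2),
            binR (n+1) i x * binR (n+1) j y * (fun k : ℕ => f (k : ℝ)) (i + j) := by
          refine sum_congr rfl fun i _ => sum_congr rfl fun j _ => ?_
          push_cast
          ring_nf
      _ = ∑ i ∈ range (n + 1), ∑ j ∈ range (n + 1), binR n i x * binR n j y *
            ((1-x)*(1-y) * f ((i:ℝ)+j) + ((1-x)*y + x*(1-y)) * f ((i:ℝ)+j+1)
              + x*y * f ((i:ℝ)+j+2)) := by
          rw [double_rec n x y (fun k : ℕ => f (k : ℝ))]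
          refine sum_congr rfl fun i _ => sum_congr rfl fun j _ => ?_
          push_cast
          ring_nf
      _ ≤ ∑ i ∈ range (n + 1), ∑ j ∈ range (n + 1), binR n i x * binR n j y * g ((i:ℝ)+j) := by
          refine sum_le_sum fun i _ => sum_le_sum fun j _ => ?_
          have hw : 0 ≤ binR n i x * binR n j y :=
            mul_nonneg (binR_nonneg hx0 hx1) (binR_nonneg hy0 hy1)
          refine mul_le_mul_of_nonneg_left ?_ hw
          simpa [hg, hm] using convex_step hf hx0 hx1 hy0 hy1 ((i:ℝ)+j)
      _ ≤ ∑ k ∈ range (2 * n + 1), binR (2 * n) k ((x + y) / 2) * g k :=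
          ih g hgconv x y hx0 hx1 hy0 hy1
      _ = ∑ k ∈ range (2 * (n+1) + 1), binR (2 * (n+1)) k ((x + y) / 2) * f k := by
          rw [show 2 * (n+1) + 1 = 2*n + 3 from by ring, show 2 * (n+1) = 2*n + 2 from by ring,
            double_rec_diag n ((x+y)/2) (fun k : ℕ => f (k : ℝ))]
          refine sum_congr rfl fun k _ => ?_
          rw [hg]
          push_cast
          rw [← hm]


/-- Proposition 1: if `X ∼ B(n,x)` and `Y ∼ B(n,y)` are independent, then
`X + Y ≤_cx B(2n,(x+y)/2)`, written via the distributions. -/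
theorem binomial_sum_cx_concentration (n : ℕ) (hn : 1 ≤ n) (x y : ℝ)
    (hx : x ∈ Set.Ioo (0:ℝ) 1) (hy : y ∈ Set.Ioo (0:ℝ) 1)
    (f : ℝ → ℝ) (hf : ConvexOn ℝ Set.univ f) :
    ∑ i ∈ range (n + 1), ∑ j ∈ range (n + 1),
        ((n.choose i : ℝ) * x ^ i * (1 - x) ^ (n - i)) *
          ((n.choose j : ℝ) * y ^ j * (1 - y) ^ (n - j)) * f ((i : ℝ) + j)
      ≤ ∑ k ∈ range (2 * n + 1),
        ((2 * n).choose k : ℝ) * ((x + y) / 2) ^ k * (1 - (x + y) / 2) ^ (2 * n - k) * f k := by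
  exact binom_cx_main n f hf x y hx.1.le hx.2.le hy.1.le hy.2.le
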